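/- Odd cycle obstruction: Let G be a loopless digraph that contains a directed cycle of odd length m ≥ 3, i.e., vertices v_1, ..., v_m with G v_i v_{i+1} for 1 ≤ i < m and G v_m v_1. If P is a poset with fewer than 3 elements, then for every k ≥ 1 there is no P-coloring of the k-walks of G. -/

import Mathlib

/-- A `k`-walk in the digraph `G` is a function `w : Fin k → V` such that
consecutive vertices are joined by an edge of `G`. -/
def IsWalk {V : Type*} (G : V → V → Prop) {k : ℕ} (w : Fin k → V) : Prop :=
  ∀ i : ℕ, ∀ h : i + 1 < k, G (w ⟨i, Nat.lt_of_succ_lt h⟩) (w ⟨i + 1, h⟩)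

theorem IsWalk.walkPrefix {V : Type*} {G : V → V → Prop} {k : ℕ} {u : Fin (k + 1) → V}
    (hu : IsWalk G u) : IsWalk G (fun i : Fin k => u i.castSucc) := by
  intro i h
  exact hu i (by omega)

theorem IsWalk.walkSuffix {V : Type*} {G : V → V → Prop} {k : ℕ} {u : Fin (k + 1) → V}
    (hu : IsWalk G u) : IsWalk G (fun i : Fin k => u i.succ) := by
  intro i h
  exact hu (i + 1) (by omega)

/-- The `k`-walks of `G`, as a subtype. -/
def Walks {V : Type*} (G : V → V → Prop) (k : ℕ) : Type _ :=
  {w : Fin k → V // IsWalk G w}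

/-- A `P`-coloring of the `k`-walks of `G`: for every `(k+1)`-walk `u`,
the color of its prefix `k`-walk is not `≤` the color of its suffix `k`-walk. -/
def IsPColoring {V : Type*} {P : Type*} [Preorder P] (G : V → V → Prop) (k : ℕ)
    (c : Walks G k → P) : Prop :=
  ∀ u : Walks G (k + 1),
    ¬ c ⟨fun i => u.1 i.castSucc, u.2.walkPrefix⟩ ≤ c ⟨fun i => u.1 i.succ, u.2.walkSuffix⟩

/-- **Odd cycle obstruction.** If a loopless digraph `G` contains a directed cycle of odd
length `m ≥ 3`, and `P` is a poset with fewer than `3` elements, then for every `k ≥ 1`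
there is no `P`-coloring of the `k`-walks of `G`. -/
theorem odd_cycle_obstruction {V : Type*} (G : V → V → Prop) (hG : ∀ v, ¬ G v v)
    (m : ℕ) (hm : 3 ≤ m) (hodd : Odd m) (v : Fin m → V)
    (hcyc : ∀ i : ℕ, ∀ h : i + 1 < m, G (v ⟨i, Nat.lt_of_succ_lt h⟩) (v ⟨i + 1, h⟩))
    (hclose : G (v ⟨m - 1, by omega⟩) (v ⟨0, by omega⟩))
    (P : Type*) [PartialOrder P] [Fintype P] (hP : Fintype.card P < 3)
    (k : ℕ) (hk : 1 ≤ k) :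
    ¬ ∃ c : Walks G k → P, IsPColoring G k c := by
  classical
  rintro ⟨c, hc⟩
  have hm0 : 0 < m := by omega
  -- Edge along the cycle, indices mod m
  have edge : ∀ a : ℕ, G (v ⟨a % m, Nat.mod_lt a hm0⟩) (v ⟨(a + 1) % m, Nat.mod_lt _ hm0⟩) := by
    intro a
    have ham : a % m < m := Nat.mod_lt a hm0
    by_cases h : a % m + 1 < m
    · have h2 : (a + 1) % m = a % m + 1 := by
        rw [Nat.add_mod, Nat.mod_eq_of_lt (show 1 < m by omega), Nat.mod_eq_of_lt h]
      have := hcyc (a % m) h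
      convert this using 2 <;> simp [Fin.ext_iff, h2]
    · have h3 : a % m = m - 1 := by omega
      have h2 : (a + 1) % m = 0 := by
        rw [Nat.add_mod, Nat.mod_eq_of_lt (show 1 < m by omega), h3,
          Nat.sub_add_cancel (by omega), Nat.mod_self]
      convert hclose using 2 <;> simp [Fin.ext_iff, h2, h3]
  -- The cyclic walks
  have Wwalk : ∀ j : ℕ, IsWalk G (fun i : Fin k => v ⟨(j + i) % m, Nat.mod_lt _ hm0⟩) := by
    intro j i h
    have := edge (j + i)
    convert this using 3 <;> simp [Nat.add_assoc]
  have Uwalk : ∀ j : ℕ, IsWalk G (fun i : Fin (k + 1) => v ⟨(j + i) % m, Nat.mod_lt _ hm0⟩) := by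
    intro j i h
    have := edge (j + i)
    convert this using 3 <;> simp [Nat.add_assoc]
  set W : ℕ → Walks G k := fun j => ⟨fun i : Fin k => v ⟨(j + i) % m, Nat.mod_lt _ hm0⟩, Wwalk j⟩
    with hW
  set p : ℕ → P := fun j => c (W j) with hp
  -- consecutive colors are not ≤
  have hstep : ∀ j : ℕ, ¬ p j ≤ p (j + 1) := by
    intro j hle
    refine hc ⟨fun i : Fin (k + 1) => v ⟨(j + i) % m, Nat.mod_lt _ hm0⟩, Uwalk j⟩ ?_
    simp only [hp] at hle
    convert hle using 2
    · rfl
    congr 1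
    apply Subtype.ext
    funext i
    simp only [hW]
    congr 1
    rw [Fin.mk.injEq, Fin.val_succ, show j + ((i : ℕ) + 1) = j + 1 + (i : ℕ) from by omega]
  have hne : ∀ j : ℕ, p j ≠ p (j + 1) := fun j h => hstep j (le_of_eq h)
  -- in a poset with < 3 elements, two-apart colors are equal
  have htwo : ∀ j : ℕ, p j = p (j + 2) := by
    intro j
    by_contra hne2
    have h01 := hne j
    have h12 := hne (j + 1)
    have : ({p j, p (j + 1), p (j + 2)} : Finset P).card = 3 := by
      rw [Finset.card_insert_of_notMem (by simp [h01, hne2]),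
        Finset.card_insert_of_notMem (by simpa using h12),
        Finset.card_singleton]
    have h4 := Finset.card_le_univ ({p j, p (j + 1), p (j + 2)} : Finset P)
    omega
  have heven : ∀ t j : ℕ, p j = p (j + 2 * t) := by
    intro t
    induction t with
    | zero => simp
    | succ n ih =>
      intro j
      have := ih (j + 2)
      rw [← htwo j] at this
      rw [this]
      congr 1
      omega
  -- periodicity: W (j + m) = W j
  have hper : ∀ j : ℕ, p (j + m) = p j := by
    intro j
    have : W (j + m) = W j := by
      apply Subtype.ext
      funext i
      simp only [hW]
      congr 1
      rw [Fin.mk.injEq, show j + m + (i : ℕ) = j + (i : ℕ) + m from by omega,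
        Nat.add_mod_right]
    simp [hp, this]
  obtain ⟨t, ht⟩ := hodd
  have h1 : p 0 = p (m + 1) := by
    have := heven (t + 1) 0
    simpa [show 2 * (t + 1) = m + 1 by omega] using this
  rw [show m + 1 = 1 + m by omega, hper 1] at h1
  exact hne 0 h1
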